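/- Let n ≥ 2, let γ_0 be the cyclic permutation (1 2 … n+1) of {1,…,n+1}, and let γ_1 be the n-cycle (n n−1 … 1) (so γ_1(i) = i−1 for 2 ≤ i ≤ n, γ_1(1) = n, and γ_1(n+1) = n+1). Then for every two non-opposite roots (i,j), (i',j') of the A_n root system, there exist 0 ≤ t ≤ n and 0 ≤ l ≤ n−1 such that both (i,j) and (i',j') belong to the Weyl chamber C_{γ_0^t γ_1^l}. -/

import Mathlib

/-- The Weyl chamber `C_γ = {(γ(i),γ(j)) : i < j}` of the `A_n` root system, for a
permutation `γ` of `{1,…,n+1}` (realized as `Fin (n+1)`). -/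
def Cham (n : ℕ) (γ : Equiv.Perm (Fin (n + 1))) : Set (Fin (n + 1) × Fin (n + 1)) :=
  { x | ∃ i j : Fin (n + 1), i < j ∧ x = (γ i, γ j) }

open scoped Fin.NatCast Fin.CommRing

private lemma neg_one_val (n : ℕ) : ((-1 : Fin (n+1)) : ℕ) = n := by
  have h : ((n : Fin (n+1))) = -1 := by
    have h2 : ((n : Fin (n+1))) + 1 = 0 := by
      have := Fin.natCast_self (n+1)
      push_cast at this
      linear_combination this
    linear_combination h2
  rw [← h, Fin.val_natCast, Nat.mod_eq_of_lt (Nat.lt_succ_self n)]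

private lemma finRotate_pow_apply (n t : ℕ) (x : Fin (n + 1)) :
    ((finRotate (n + 1)) ^ t) x = x + (t : Fin (n + 1)) := by
  induction t with
  | zero => simp
  | succ t ih =>
      rw [pow_succ', Equiv.Perm.mul_apply, ih, finRotate_succ_apply]
      push_cast
      ring

private lemma gamma1_pow_apply (n : ℕ) (hn : 2 ≤ n) (γ1 : Equiv.Perm (Fin (n + 1)))
    (hγ1 : ∀ i : Fin (n + 1), ((γ1 i : ℕ) =
      if (i : ℕ) = n then n else if (i : ℕ) = 0 then n - 1 else (i : ℕ) - 1))
    (l : ℕ) : ∀ x : Fin (n + 1), ((γ1 ^ l) x : ℕ) =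
      if (x : ℕ) = n then n else ((x : ℕ) + l * (n - 1)) % n := by
  induction l with
  | zero =>
      intro x
      simp only [pow_zero, Equiv.Perm.one_apply, Nat.zero_mul, Nat.add_zero]
      split
      · next h => exact h
      · next h =>
          have := x.isLt
          exact (Nat.mod_eq_of_lt (by omega)).symm
  | succ l ih =>
      intro x
      rw [pow_succ, Equiv.Perm.mul_apply, ih (γ1 x)]
      have hxlt := x.isLt
      have hm : (l+1) * (n-1) = l * (n-1) + (n-1) := by ring
      by_cases h1 : (x : ℕ) = n
      · have hg : ((γ1 x):ℕ) = n := by rw [hγ1 x, if_pos h1]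
        rw [hg, if_pos rfl, if_pos h1]
      · rw [if_neg h1]
        by_cases h0 : (x : ℕ) = 0
        · have hg : ((γ1 x):ℕ) = n - 1 := by rw [hγ1 x, if_neg h1, if_pos h0]
          rw [hg, if_neg (show ¬(n-1 = n) by omega), h0, hm]
          congr 1
          omega
        · have hg : ((γ1 x):ℕ) = (x:ℕ) - 1 := by rw [hγ1 x, if_neg h1, if_neg h0]
          rw [hg, if_neg (show ¬((x:ℕ)-1 = n) by omega)]
          have key : (x:ℕ) + (l+1) * (n-1) = ((x:ℕ) - 1 + l * (n-1)) + n := by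
            rw [hm]; omega
          rw [key, Nat.add_mod_right]

private lemma sigma_last (n : ℕ) (hn : 2 ≤ n) (γ1 : Equiv.Perm (Fin (n + 1)))
    (hγ1 : ∀ i : Fin (n + 1), ((γ1 i : ℕ) =
      if (i : ℕ) = n then n else if (i : ℕ) = 0 then n - 1 else (i : ℕ) - 1))
    (τ : Fin (n+1)) (l : ℕ) :
    (finRotate (n+1) ^ (τ : ℕ) * γ1 ^ l) ⟨n, Nat.lt_succ_self n⟩ = τ - 1 := by
  rw [Equiv.Perm.mul_apply]
  have h1 : (γ1 ^ l) ⟨n, Nat.lt_succ_self n⟩ = ⟨n, Nat.lt_succ_self n⟩ := by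
    apply Fin.ext
    rw [gamma1_pow_apply n hn γ1 hγ1 l]
    simp
  rw [h1, finRotate_pow_apply, Fin.cast_val_eq_self]
  have h2 : (⟨n, Nat.lt_succ_self n⟩ : Fin (n+1)) = -1 := by
    apply Fin.ext
    rw [neg_one_val]
  rw [h2]
  ring

private lemma sigma_hit (n : ℕ) (hn : 2 ≤ n) (γ1 : Equiv.Perm (Fin (n + 1)))
    (hγ1 : ∀ i : Fin (n + 1), ((γ1 i : ℕ) =
      if (i : ℕ) = n then n else if (i : ℕ) = 0 then n - 1 else (i : ℕ) - 1))
    (τ x : Fin (n+1)) (l : ℕ) (hx : ((x - τ : Fin (n+1)) : ℕ) ≠ n) :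
    ∃ i : Fin (n+1), (i : ℕ) = (((x - τ : Fin (n+1)) : ℕ) + l) % n ∧
      (finRotate (n+1) ^ (τ : ℕ) * γ1 ^ l) i = x := by
  set k : ℕ := ((x - τ : Fin (n+1)) : ℕ) with hk
  have hklt : k < n := by have := (x - τ).isLt; omega
  have hn0 : 0 < n := by omega
  have hlt : (k + l) % n < n := Nat.mod_lt (k + l) hn0
  have hb : (k + l) % n < n + 1 := by omega
  refine ⟨⟨(k + l) % n, hb⟩, rfl, ?_⟩
  rw [Equiv.Perm.mul_apply]
  have h1 : (γ1 ^ l) ⟨(k + l) % n, hb⟩ = x - τ := by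
    apply Fin.ext
    rw [gamma1_pow_apply n hn γ1 hγ1 l]
    rw [if_neg (show ¬((⟨(k + l) % n, hb⟩ : Fin (n+1)) : ℕ) = n by simp only []; omega)]
    show ((k + l) % n + l * (n-1)) % n = k
    rw [Nat.mod_add_mod]
    have h2 : k + l + l * (n - 1) = k + l * n := by
      have h3 : l + l * (n-1) = l * n := by
        calc l + l * (n-1) = l * ((n-1) + 1) := by ring
        _ = l * n := by rw [Nat.sub_add_cancel (by omega)]
      omega
    rw [h2, Nat.add_mul_mod_self_right, Nat.mod_eq_of_lt hklt]
  rw [h1, finRotate_pow_apply, Fin.cast_val_eq_self]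
  ring

private lemma zero_pos_lemma (n k : ℕ) (hn : 0 < n) (hk : k < n) :
    (k + (n - k) % n) % n = 0 := by
  rcases Nat.eq_zero_or_pos k with h | h
  · subst h
    simp
  · have h4 : (n - k) % n = n - k := Nat.mod_eq_of_lt (by omega)
    have h5 : k + (n - k) = n := by omega
    rw [h4, h5, Nat.mod_self]

private lemma sub_ne_lemma (n : ℕ) (x y : Fin (n+1)) (hxy : x ≠ y) :
    ((x - (y + 1) : Fin (n+1)) : ℕ) ≠ n := by
  intro h
  apply hxy
  have h2 : ((y - (y + 1) : Fin (n+1)) : ℕ) = n := by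
    have he : (y - (y + 1) : Fin (n+1)) = -1 := by ring
    rw [he, neg_one_val]
  have h3 : (x - (y + 1) : Fin (n+1)) = (y - (y + 1) : Fin (n+1)) :=
    Fin.ext (by rw [h, h2])
  exact sub_left_inj.mp h3

/-- Let `n ≥ 2`, let `γ₀` be the cyclic permutation `(1 2 … n+1)`
(realized as `finRotate (n+1)`), and let `γ₁` be the `n`-cycle `(n n−1 … 1)` (in the
`0`-based realization `Fin (n+1)`: `γ₁` fixes the last element `n`, sends `0` to `n−1`, and
sends `a` to `a−1` for `1 ≤ a ≤ n−1`).  Then every pair of non-opposite roots of the `A_n`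
root system is contained in a common Weyl chamber `C_{γ₀^t γ₁^l}` with `0 ≤ t ≤ n` and
`0 ≤ l ≤ n−1`. -/
theorem pair_of_roots_in_chamber_gamma0_gamma1 (n : ℕ) (hn : 2 ≤ n)
    (γ1 : Equiv.Perm (Fin (n + 1)))
    (hγ1 : ∀ i : Fin (n + 1), ((γ1 i : ℕ) =
      if (i : ℕ) = n then n else if (i : ℕ) = 0 then n - 1 else (i : ℕ) - 1))
    (α β : Fin (n + 1) × Fin (n + 1)) (hα : α.1 ≠ α.2) (hβ : β.1 ≠ β.2)
    (hop : β ≠ (α.2, α.1)) :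
    ∃ t l : ℕ, t ≤ n ∧ l ≤ n - 1 ∧
      α ∈ Cham n (finRotate (n + 1) ^ t * γ1 ^ l) ∧
      β ∈ Cham n (finRotate (n + 1) ^ t * γ1 ^ l) := by
  obtain ⟨a, b⟩ := α
  obtain ⟨c, d⟩ := β
  simp only [ne_eq, Prod.mk.injEq, not_and] at hα hβ hop
  have hn0 : 0 < n := by omega
  by_cases hcb : c = b
  · -- Case c = b : take m = d (max element), i.e. tau = d + 1, cut at a.
    subst hcb
    have hda : d ≠ a := hop rfl
    set τ : Fin (n+1) := d + 1 with hτ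
    have hkan : ((a - τ : Fin (n+1)) : ℕ) ≠ n := sub_ne_lemma n a d (fun h => hda h.symm)
    have hkbn : ((c - τ : Fin (n+1)) : ℕ) ≠ n := sub_ne_lemma n c d hβ
    set k : ℕ := ((a - τ : Fin (n+1)) : ℕ) with hk
    have hklt : k < n := by have := (a - τ).isLt; omega
    set l : ℕ := (n - k) % n with hl
    have hlt : l < n := Nat.mod_lt _ hn0
    obtain ⟨ia, hia, hia2⟩ := sigma_hit n hn γ1 hγ1 τ a l hkan
    obtain ⟨ib, hib, hib2⟩ := sigma_hit n hn γ1 hγ1 τ c l hkbn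
    have htop : (finRotate (n+1) ^ (τ : ℕ) * γ1 ^ l) ⟨n, Nat.lt_succ_self n⟩ = d := by
      rw [sigma_last n hn γ1 hγ1 τ l, hτ]
      ring
    have hia0 : (ia : ℕ) = 0 := by
      rw [hia, ← hk, hl]
      exact zero_pos_lemma n k hn0 hklt
    refine ⟨(τ : ℕ), l, Nat.lt_succ_iff.mp τ.isLt, by omega, ?_, ?_⟩
    · refine ⟨ia, ib, ?_, ?_⟩
      · rw [Fin.lt_def, hia0]
        rcases Nat.eq_zero_or_pos (ib : ℕ) with h | h
        · exfalso
          apply hα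
          rw [← hia2, ← hib2]
          congr 1
          exact Fin.ext (by rw [hia0, h])
        · exact h
      · rw [hia2, hib2]
    · refine ⟨ib, ⟨n, Nat.lt_succ_self n⟩, ?_, ?_⟩
      · rw [Fin.lt_def, hib]
        exact Nat.mod_lt _ hn0
      · rw [hib2, htop]
  · -- Case c ≠ b : take m = b (max element), i.e. τ = b + 1, cut at c.
    set τ : Fin (n+1) := b + 1 with hτ
    have hkan : ((a - τ : Fin (n+1)) : ℕ) ≠ n := sub_ne_lemma n a b hα
    have hkcn : ((c - τ : Fin (n+1)) : ℕ) ≠ n := sub_ne_lemma n c b hcb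
    set k : ℕ := ((c - τ : Fin (n+1)) : ℕ) with hk
    have hklt : k < n := by have := (c - τ).isLt; omega
    set l : ℕ := (n - k) % n with hl
    have hlt : l < n := Nat.mod_lt _ hn0
    obtain ⟨ia, hia, hia2⟩ := sigma_hit n hn γ1 hγ1 τ a l hkan
    obtain ⟨ic, hic, hic2⟩ := sigma_hit n hn γ1 hγ1 τ c l hkcn
    have htop : (finRotate (n+1) ^ (τ : ℕ) * γ1 ^ l) ⟨n, Nat.lt_succ_self n⟩ = b := by
      rw [sigma_last n hn γ1 hγ1 τ l, hτ]
      ring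
    have hic0 : (ic : ℕ) = 0 := by
      rw [hic, ← hk, hl]
      exact zero_pos_lemma n k hn0 hklt
    refine ⟨(τ : ℕ), l, Nat.lt_succ_iff.mp τ.isLt, by omega, ?_, ?_⟩
    · refine ⟨ia, ⟨n, Nat.lt_succ_self n⟩, ?_, ?_⟩
      · rw [Fin.lt_def, hia]
        exact Nat.mod_lt _ hn0
      · rw [hia2, htop]
    · by_cases hdb : d = b
      · refine ⟨ic, ⟨n, Nat.lt_succ_self n⟩, ?_, ?_⟩
        · rw [Fin.lt_def, hic]
          exact Nat.mod_lt _ hn0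
        · rw [hic2, htop, hdb]
      · have hkdn : ((d - τ : Fin (n+1)) : ℕ) ≠ n := sub_ne_lemma n d b hdb
        obtain ⟨id', hid, hid2⟩ := sigma_hit n hn γ1 hγ1 τ d l hkdn
        refine ⟨ic, id', ?_, ?_⟩
        · rw [Fin.lt_def, hic0]
          rcases Nat.eq_zero_or_pos (id' : ℕ) with h | h
          · exfalso
            apply hβ
            rw [← hic2, ← hid2]
            congr 1
            exact Fin.ext (by rw [hic0, h])
          · exact h
        · rw [hic2, hid2]
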